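/- Let γ₀ > 0, μ > 0, τ₀ > 0 with μ τ₀ ≤ 2, and define γ_{k+1} = γ_k (1 + μ τ_k) with τ_k = τ₀ √(γ₀/γ_k). Then for all k ≥ 0, γ_k ≤ γ₀ (k+1)². -/

import Mathlib

theorem stmt_1 (γ₀ μ τ₀ : ℝ) (hγ₀ : γ₀ > 0) (hμ : μ > 0) (hτ₀ : τ₀ > 0)
    (hμτ : μ * τ₀ ≤ 2)
    (γ τ : ℕ → ℝ) (h0 : γ 0 = γ₀)
    (hτ : ∀ k, τ k = τ₀ * Real.sqrt (γ₀ / γ k))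
    (hrec : ∀ k, γ (k + 1) = γ k * (1 + μ * τ k)) :
    ∀ k : ℕ, γ k ≤ γ₀ * ((k : ℝ) + 1) ^ 2 := by
  have hpos : ∀ k, 0 < γ k := by
    intro k
    induction k with
    | zero => rw [h0]; exact hγ₀
    | succ n ih =>
      rw [hrec n, hτ n]
      have hs : 0 ≤ Real.sqrt (γ₀ / γ n) := Real.sqrt_nonneg _
      have : 0 < 1 + μ * (τ₀ * Real.sqrt (γ₀ / γ n)) := by positivity
      exact mul_pos ih this
  intro k
  induction k with
  | zero => simp [h0]
  | succ n ih =>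
    have hγn := hpos n
    have h1 : Real.sqrt (γ₀ / γ n) = Real.sqrt γ₀ / Real.sqrt (γ n) :=
      Real.sqrt_div hγ₀.le _
    have h2 : Real.sqrt (γ₀ * γ n) = Real.sqrt γ₀ * Real.sqrt (γ n) :=
      Real.sqrt_mul hγ₀.le _
    have h3 : Real.sqrt (γ n) * Real.sqrt (γ n) = γ n := Real.mul_self_sqrt hγn.le
    have hsn : 0 < Real.sqrt (γ n) := Real.sqrt_pos.mpr hγn
    have key : γ n * Real.sqrt (γ₀ / γ n) = Real.sqrt (γ₀ * γ n) := by
      rw [h1, h2]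
      field_simp
      linear_combination -h3
    have hb : Real.sqrt (γ₀ * γ n) ≤ γ₀ * ((n : ℝ) + 1) := by
      have h4 : γ₀ * γ n ≤ γ₀ * (γ₀ * ((n : ℝ) + 1) ^ 2) :=
        mul_le_mul_of_nonneg_left ih hγ₀.le
      have h5 : Real.sqrt (γ₀ * (γ₀ * ((n : ℝ) + 1) ^ 2)) = γ₀ * ((n : ℝ) + 1) := by
        rw [show γ₀ * (γ₀ * ((n : ℝ) + 1) ^ 2) = (γ₀ * ((n : ℝ) + 1)) ^ 2 by ring]
        exact Real.sqrt_sq (by positivity)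
      calc Real.sqrt (γ₀ * γ n) ≤ Real.sqrt (γ₀ * (γ₀ * ((n : ℝ) + 1) ^ 2)) :=
            Real.sqrt_le_sqrt h4
        _ = γ₀ * ((n : ℝ) + 1) := h5
    have hsz : 0 ≤ Real.sqrt (γ₀ * γ n) := Real.sqrt_nonneg _
    have heq : γ (n + 1) = γ n + μ * τ₀ * Real.sqrt (γ₀ * γ n) := by
      rw [hrec n, hτ n, ← key]; ring
    rw [heq]
    push_cast
    nlinarith [mul_le_mul_of_nonneg_right hμτ hsz, hγ₀, hb, hμ.le, hτ₀.le]
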